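/- For a character χ of F_q^×, the endomorphism algebra of Ind_B^{GL_2(F_q)}(χ_{1,1}) has dimension 2 over C, where χ_{1,1}([[u,w],[0,v]]) = χ(u)χ(v); equivalently this induced representation is a direct sum of exactly two inequivalent irreducibles. -/

import Mathlib

open CategoryTheory Module

variable {G : Type} [Group G] [Fintype G]

/-- The space of the representation of `G` induced from a one-dimensional character `χ` of a
subgroup `H` (for the trivial character this is `Ind_H^G 1`): the subspace of functions
`f : G → ℂ` with `f (b * g) = χ b * f g` for `b ∈ H`, with `G` acting by right translation. -/
noncomputable def indCarrier (H : Subgroup G) (χ : G → ℂ) : Submodule ℂ (G → ℂ) where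
  carrier := {f | ∀ b ∈ H, ∀ g : G, f (b * g) = χ b * f g}
  add_mem' := by
    intro f g hf hg b hb x
    simp only [Pi.add_apply, hf b hb x, hg b hb x, mul_add]
  zero_mem' := by
    intro b hb x; simp
  smul_mem' := by
    intro c f hf b hb x
    simp only [Pi.smul_apply, smul_eq_mul, hf b hb x]
    ring

/-- The induced representation `Ind_H^G χ`, as right translation on `indCarrier H χ`. -/
noncomputable def indRep (H : Subgroup G) (χ : G → ℂ) : Representation ℂ G (indCarrier H χ) where
  toFun g :=
    { toFun := fun f => ⟨fun x => (f : G → ℂ) (x * g), fun b hb x => by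
        simpa [mul_assoc] using f.2 b hb (x * g)⟩
      map_add' := fun f h => rfl
      map_smul' := fun c f => rfl }
  map_one' := by
    ext f x
    simp
  map_mul' := fun g h => by
    ext f x
    simp [mul_assoc]

noncomputable example (H : Subgroup G) (χ : G → ℂ) : FDRep ℂ G := FDRep.of (indRep H χ)

section General

variable (H : Subgroup G) (χ : G → ℂ)

/-- bi-equivariant functions -/
noncomputable def biInd : Submodule ℂ (G → ℂ) where
  carrier := {h | (∀ b ∈ H, ∀ g, h (b * g) = χ b * h g) ∧ (∀ b ∈ H, ∀ g, h (g * b) = χ b * h g)}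
  add_mem' := fun hf hg => ⟨fun b hb x => by
      simp only [Pi.add_apply, hf.1 b hb x, hg.1 b hb x, mul_add],
    fun b hb x => by simp only [Pi.add_apply, hf.2 b hb x, hg.2 b hb x, mul_add]⟩
  zero_mem' := ⟨fun b hb x => by simp, fun b hb x => by simp⟩
  smul_mem' := fun c f hf => ⟨fun b hb x => by
      simp only [Pi.smul_apply, smul_eq_mul, hf.1 b hb x]; ring,
    fun b hb x => by simp only [Pi.smul_apply, smul_eq_mul, hf.2 b hb x]; ring⟩

variable (hmul : ∀ b ∈ H, ∀ b' ∈ H, χ (b * b') = χ b * χ b') (hone : χ 1 = 1)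

open Classical in
/-- the canonical vector of the induced rep: χ extended by zero off `H`. -/
noncomputable def chiInd : indCarrier H χ :=
  ⟨fun x => if x ∈ H then χ x else 0, by
    intro b hb x
    show (if b * x ∈ H then χ (b * x) else 0) = χ b * (if x ∈ H then χ x else 0)
    by_cases hx : x ∈ H
    · rw [if_pos (H.mul_mem hb hx), if_pos hx, hmul b hb x hx]
    · rw [if_neg, if_neg hx, mul_zero]
      intro hbx
      exact hx (by simpa using H.mul_mem (H.inv_mem hb) hbx)⟩

include hmul hone in
lemma chi_inv_mul : ∀ b ∈ H, χ b⁻¹ * χ b = 1 := by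
  intro b hb
  rw [← hmul b⁻¹ (H.inv_mem hb) b hb, inv_mul_cancel, hone]

include hmul hone in
lemma key_sum (f : indCarrier H χ) (y : G) :
    ∑ x : G, (f : G → ℂ) x * (chiInd H χ hmul : G → ℂ) (y * x⁻¹)
      = (Nat.card H : ℂ) * (f : G → ℂ) y := by
  classical
  rw [Fintype.sum_equiv ((Equiv.inv G).trans (Equiv.mulLeft y)) _
    (fun z => if z ∈ H then (f : G → ℂ) (z⁻¹ * y) * χ z else 0)
    (fun x => by
      show (f : G → ℂ) x * (if y * x⁻¹ ∈ H then χ (y * x⁻¹) else 0)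
        = if y * x⁻¹ ∈ H then (f : G → ℂ) ((y * x⁻¹)⁻¹ * y) * χ (y * x⁻¹) else 0
      split_ifs with hz
      · congr 1
        group
      · simp)]
  have : ∀ z : G, (if z ∈ H then (f : G → ℂ) (z⁻¹ * y) * χ z else 0)
      = if z ∈ H then (f : G → ℂ) y else 0 := by
    intro z
    split_ifs with hz
    · rw [f.2 z⁻¹ (H.inv_mem hz) y]
      have h1 := chi_inv_mul H χ hmul hone z hz
      calc χ z⁻¹ * (f : G → ℂ) y * χ z = χ z⁻¹ * χ z * (f : G → ℂ) y := by ring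
        _ = (f : G → ℂ) y := by rw [h1, one_mul]
    · rfl
  simp only [this]
  rw [Finset.sum_ite, Finset.sum_const, Finset.sum_const_zero, add_zero, nsmul_eq_mul]
  congr 1
  rw [Nat.card_eq_fintype_card, Fintype.card_subtype]
include hmul in
lemma rho_chiInd (b : G) (hb : b ∈ H) :
    indRep H χ b (chiInd H χ hmul) = χ b • chiInd H χ hmul := by
  classical
  apply Subtype.ext; funext x
  show (if x * b ∈ H then χ (x * b) else 0) = χ b * (if x ∈ H then χ x else 0)
  by_cases hx : x ∈ H
  · rw [if_pos (H.mul_mem hx hb), if_pos hx, hmul x hx b hb]; ring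
  · rw [if_neg, if_neg hx, mul_zero]
    intro hxb
    exact hx (by simpa using H.mul_mem hxb (H.inv_mem hb))

omit [Fintype G] in
lemma cardH_ne_zero [Finite G] : (Nat.card H : ℂ) ≠ 0 := by
  have : (0 : ℕ) < Nat.card H := Nat.card_pos
  exact_mod_cast this.ne'

include hmul hone in
lemma recon (f : indCarrier H χ) :
    (Nat.card H : ℂ)⁻¹ • ∑ x : G, ((f : G → ℂ) x) • (indRep H χ x⁻¹ (chiInd H χ hmul)) = f := by
  apply Subtype.ext; funext y
  have hc : (Nat.card H : ℂ) ≠ 0 := cardH_ne_zero H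
  have key : ∀ x : G, ((((f : G → ℂ) x) • (indRep H χ x⁻¹ (chiInd H χ hmul)) : indCarrier H χ) : G → ℂ) y
      = (f : G → ℂ) x * (chiInd H χ hmul : G → ℂ) (y * x⁻¹) := fun x => rfl
  rw [SetLike.val_smul, Pi.smul_apply, AddSubmonoidClass.coe_finset_sum, Finset.sum_apply]
  simp only [key]
  rw [key_sum H χ hmul hone f y, smul_eq_mul]
  field_simp

/-- convolution with a bi-equivariant function, as a linear endomorphism -/
noncomputable def convLin (h : biInd H χ) : indCarrier H χ →ₗ[ℂ] indCarrier H χ where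
  toFun f := ⟨fun y => (Nat.card H : ℂ)⁻¹ * ∑ x : G, (h : G → ℂ) (y * x⁻¹) * (f : G → ℂ) x, by
    intro b hb y
    show (Nat.card H : ℂ)⁻¹ * ∑ x : G, (h : G → ℂ) (b * y * x⁻¹) * (f : G → ℂ) x = _
    have : ∀ x : G, (h : G → ℂ) (b * y * x⁻¹) * (f : G → ℂ) x
        = χ b * ((h : G → ℂ) (y * x⁻¹) * (f : G → ℂ) x) := fun x => by
      rw [mul_assoc b y x⁻¹, h.2.1 b hb (y * x⁻¹)]; ring
    simp only [this, ← Finset.mul_sum]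
    ring⟩
  map_add' f g := by
    apply Subtype.ext; funext y
    show (Nat.card H : ℂ)⁻¹ * ∑ x : G, (h : G → ℂ) (y * x⁻¹) * ((f : G → ℂ) x + (g : G → ℂ) x)
      = (Nat.card H : ℂ)⁻¹ * ∑ x : G, (h : G → ℂ) (y * x⁻¹) * (f : G → ℂ) x
        + (Nat.card H : ℂ)⁻¹ * ∑ x : G, (h : G → ℂ) (y * x⁻¹) * (g : G → ℂ) x
    simp only [mul_add, Finset.sum_add_distrib]
  map_smul' c f := by
    apply Subtype.ext; funext y
    show (Nat.card H : ℂ)⁻¹ * ∑ x : G, (h : G → ℂ) (y * x⁻¹) * (c * (f : G → ℂ) x)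
      = c * ((Nat.card H : ℂ)⁻¹ * ∑ x : G, (h : G → ℂ) (y * x⁻¹) * (f : G → ℂ) x)
    have : ∀ x : G, (h : G → ℂ) (y * x⁻¹) * (c * (f : G → ℂ) x)
        = c * ((h : G → ℂ) (y * x⁻¹) * (f : G → ℂ) x) := fun x => by ring
    simp only [this, ← Finset.mul_sum]
    ring

lemma convLin_comm (h : biInd H χ) (g : G) (f : indCarrier H χ) :
    convLin H χ h (indRep H χ g f) = indRep H χ g (convLin H χ h f) := by
  refine Subtype.ext (funext fun y => ?_)
  show (Nat.card H : ℂ)⁻¹ * ∑ x : G, (h : G → ℂ) (y * x⁻¹) * (f : G → ℂ) (x * g)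
    = (Nat.card H : ℂ)⁻¹ * ∑ x : G, (h : G → ℂ) (y * g * x⁻¹) * (f : G → ℂ) x
  congr 1
  exact Fintype.sum_equiv (Equiv.mulRight g) _ _ (fun x => by
    show (h : G → ℂ) (y * x⁻¹) * (f : G → ℂ) (x * g)
      = (h : G → ℂ) (y * g * (x * g)⁻¹) * (f : G → ℂ) (x * g)
    congr 2
    group)

/-- convolution as an endomorphism of the induced representation -/
noncomputable def convHom (h : biInd H χ) :
    FDRep.of (indRep H χ) ⟶ FDRep.of (indRep H χ) where
  hom := FGModuleCat.ofHom (convLin H χ h)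
  comm := fun g => FGModuleCat.hom_ext (LinearMap.ext fun f => convLin_comm H χ h g f)
lemma fdHom_comm_apply {X Y : FDRep ℂ G} (φ : X ⟶ Y) (g : G) (v : X) :
    φ.hom (X.ρ g v) = Y.ρ g (φ.hom v) :=
  ConcreteCategory.congr_hom (φ.comm g) v

/-- evaluation of an endomorphism of the induced representation, as a map of the carrier -/
noncomputable def evHom (φ : FDRep.of (indRep H χ) ⟶ FDRep.of (indRep H χ))
    (v : indCarrier H χ) : indCarrier H χ := φ.hom v

lemma evHom_comm (φ : FDRep.of (indRep H χ) ⟶ FDRep.of (indRep H χ)) (g : G)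
    (v : indCarrier H χ) :
    evHom H χ φ (indRep H χ g v) = indRep H χ g (evHom H χ φ v) :=
  fdHom_comm_apply φ g v

lemma evHom_smul (φ : FDRep.of (indRep H χ) ⟶ FDRep.of (indRep H χ)) (c : ℂ)
    (v : indCarrier H χ) : evHom H χ φ (c • v) = c • evHom H χ φ v :=
  map_smul φ.hom.hom.hom c v

lemma evHom_sum (φ : FDRep.of (indRep H χ) ⟶ FDRep.of (indRep H χ)) {ι : Type}
    (s : Finset ι) (F : ι → indCarrier H χ) :
    evHom H χ φ (∑ x ∈ s, F x) = ∑ x ∈ s, evHom H χ φ (F x) :=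
  map_sum φ.hom.hom.hom F s

lemma evHom_add (φ ψ : FDRep.of (indRep H χ) ⟶ FDRep.of (indRep H χ)) (v : indCarrier H χ) :
    evHom H χ (φ + ψ) v = evHom H χ φ v + evHom H χ ψ v := by
  unfold evHom
  rw [Action.add_hom]
  rfl

lemma evHom_csmul (c : ℂ) (φ : FDRep.of (indRep H χ) ⟶ FDRep.of (indRep H χ))
    (v : indCarrier H χ) : evHom H χ (c • φ) v = c • evHom H χ φ v := by
  unfold evHom
  rw [Action.smul_hom]
  rfl

lemma evHom_convHom (h : biInd H χ) (v : indCarrier H χ) :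
    evHom H χ (convHom H χ h) v = convLin H χ h v := rfl

include hmul hone in
lemma key_sum2 (h : biInd H χ) (g : G) :
    ∑ x : G, (h : G → ℂ) (g * x⁻¹) * (chiInd H χ hmul : G → ℂ) x
      = (Nat.card H : ℂ) * (h : G → ℂ) g := by
  classical
  have key : ∀ x : G, (h : G → ℂ) (g * x⁻¹) * (chiInd H χ hmul : G → ℂ) x
      = if x ∈ H then (h : G → ℂ) g else 0 := by
    intro x
    show (h : G → ℂ) (g * x⁻¹) * (if x ∈ H then χ x else 0) = _
    split_ifs with hx
    · rw [h.2.2 x⁻¹ (H.inv_mem hx) g]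
      have h1 := chi_inv_mul H χ hmul hone x hx
      calc χ x⁻¹ * (h : G → ℂ) g * χ x = χ x⁻¹ * χ x * (h : G → ℂ) g := by ring
        _ = (h : G → ℂ) g := by rw [h1, one_mul]
    · simp
  simp only [key]
  rw [Finset.sum_ite, Finset.sum_const, Finset.sum_const_zero, add_zero, nsmul_eq_mul]
  congr 1
  rw [Nat.card_eq_fintype_card, Fintype.card_subtype]

set_option maxHeartbeats 2000000 in
/-- Frobenius-style equivalence: endomorphisms of the induced representation correspond
to bi-equivariant functions. -/
noncomputable def homEquivBi :
    (FDRep.of (indRep H χ) ⟶ FDRep.of (indRep H χ)) ≃ₗ[ℂ] biInd H χ where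
  toFun φ := ⟨fun g => (evHom H χ φ (chiInd H χ hmul) : G → ℂ) g,
    ⟨(evHom H χ φ (chiInd H χ hmul)).2, fun b hb g => by
      have h2 : evHom H χ φ ((indRep H χ b) (chiInd H χ hmul))
          = (indRep H χ b) (evHom H χ φ (chiInd H χ hmul)) :=
        evHom_comm H χ φ b (chiInd H χ hmul)
      rw [rho_chiInd H χ hmul b hb, evHom_smul] at h2
      have h3 := congrArg (fun v : indCarrier H χ => (v : G → ℂ) g) h2
      simp only [SetLike.val_smul, Pi.smul_apply, smul_eq_mul] at h3
      exact h3.symm⟩⟩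
  map_add' φ ψ := by
    apply Subtype.ext; funext g
    show (evHom H χ (φ + ψ) (chiInd H χ hmul) : G → ℂ) g = _
    rw [evHom_add]
    rfl
  map_smul' c φ := by
    apply Subtype.ext; funext g
    show (evHom H χ (c • φ) (chiInd H χ hmul) : G → ℂ) g = _
    rw [evHom_csmul]
    rfl
  invFun h := convHom H χ h
  left_inv φ := by
    apply Action.hom_ext
    apply FGModuleCat.hom_ext
    refine LinearMap.ext fun (f : indCarrier H χ) => ?_
    refine Subtype.ext (funext fun y => ?_)
    show (Nat.card H : ℂ)⁻¹ * ∑ x : G,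
        (evHom H χ φ (chiInd H χ hmul) : G → ℂ) (y * x⁻¹) * (f : G → ℂ) x
      = (evHom H χ φ f : G → ℂ) y
    have key : ∀ x : G, (evHom H χ φ ((indRep H χ x⁻¹) (chiInd H χ hmul)) : G → ℂ) y
        = (evHom H χ φ (chiInd H χ hmul) : G → ℂ) (y * x⁻¹) := by
      intro x
      have h3 := congrArg (fun v : indCarrier H χ => (v : G → ℂ) y)
        (evHom_comm H χ φ x⁻¹ (chiInd H χ hmul))
      exact h3
    conv_rhs => rw [← recon H χ hmul hone f]
    rw [evHom_smul, evHom_sum, SetLike.val_smul, Pi.smul_apply,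
      AddSubmonoidClass.coe_finset_sum, Finset.sum_apply, smul_eq_mul]
    congr 1
    refine Finset.sum_congr rfl fun x _ => ?_
    rw [evHom_smul, SetLike.val_smul, Pi.smul_apply, smul_eq_mul, key x]
    exact mul_comm _ _
  right_inv h := by
    apply Subtype.ext; funext g
    show (Nat.card H : ℂ)⁻¹ * ∑ x : G, (h : G → ℂ) (g * x⁻¹) * (chiInd H χ hmul : G → ℂ) x
      = (h : G → ℂ) g
    rw [key_sum2 H χ hmul hone h g, ← mul_assoc, inv_mul_cancel₀ (cardH_ne_zero H), one_mul]

include hmul hone in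
lemma finrank_hom_eq :
    finrank ℂ (FDRep.of (indRep H χ) ⟶ FDRep.of (indRep H χ)) = finrank ℂ (biInd H χ) :=
  (homEquivBi H χ hmul hone).finrank_eq

end General

variable (F : Type) [Field F] [Fintype F] [DecidableEq F]

/-- The BorelGL2 subgroup of upper triangular matrices in `GL_2(F)`. -/
def BorelGL2 : Subgroup (GL (Fin 2) F) where
  carrier := {g | (g : Matrix (Fin 2) (Fin 2) F) 1 0 = 0}
  one_mem' := by simp [Set.mem_setOf_eq, Matrix.one_apply]
  mul_mem' := by
    intro a b ha hb
    simp only [Set.mem_setOf_eq, Units.val_mul, Matrix.mul_apply, Fin.sum_univ_two] at *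
    rw [ha, hb]
    ring
  inv_mem' := by
    intro a ha
    simp only [Set.mem_setOf_eq] at *
    have h1 : (a : Matrix (Fin 2) (Fin 2) F) * ((a⁻¹ : GL (Fin 2) F) : Matrix (Fin 2) (Fin 2) F)
        = 1 := a.mul_inv
    have h2 := congrFun (congrFun h1 1) 0
    simp only [Matrix.mul_apply, Fin.sum_univ_two, Matrix.one_apply, ha] at h2
    have hdet : ((a : Matrix (Fin 2) (Fin 2) F)).det ≠ 0 :=
      ((Matrix.isUnit_iff_isUnit_det _).mp a.isUnit).ne_zero
    have h11 : (a : Matrix (Fin 2) (Fin 2) F) 1 1 ≠ 0 := by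
      intro h
      apply hdet
      rw [Matrix.det_fin_two, ha, h]
      ring
    rcases (by simpa using h2 : (a : Matrix (Fin 2) (Fin 2) F) 1 1 = 0 ∨
        ((a⁻¹ : GL (Fin 2) F) : Matrix (Fin 2) (Fin 2) F) 1 0 = 0) with h | h
    · exact absurd h h11
    · exact h

/-- The subgroup `P` of `GL_2(F)` of matrices of the form `[[1, y], [0, w]]`. -/
def mirabolic : Subgroup (GL (Fin 2) F) where
  carrier := {g | (g : Matrix (Fin 2) (Fin 2) F) 0 0 = 1 ∧
    (g : Matrix (Fin 2) (Fin 2) F) 1 0 = 0}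
  one_mem' := by simp [Set.mem_setOf_eq, Matrix.one_apply]
  mul_mem' := by
    intro a b ha hb
    simp only [Set.mem_setOf_eq, Units.val_mul, Matrix.mul_apply, Fin.sum_univ_two] at *
    rw [ha.1, ha.2, hb.1, hb.2]
    constructor <;> ring
  inv_mem' := by
    intro a ha
    simp only [Set.mem_setOf_eq] at *
    have h1 : ((a⁻¹ : GL (Fin 2) F) : Matrix (Fin 2) (Fin 2) F) * (a : Matrix (Fin 2) (Fin 2) F)
        = 1 := a.inv_mul
    have h00 := congrFun (congrFun h1 0) 0
    have h10 := congrFun (congrFun h1 1) 0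
    simp only [Matrix.mul_apply, Fin.sum_univ_two, Matrix.one_apply, ha.1, ha.2, mul_one,
      mul_zero, add_zero] at h00 h10
    exact ⟨by simpa using h00, by simpa using h10⟩

/-- The extension by zero of a character of `F^×` to `F`. -/
noncomputable def extChar (χ : Fˣ →* ℂˣ) : F → ℂ :=
  fun x => if h : IsUnit x then (χ h.unit : ℂ) else 0

section GL2

variable (F : Type) [Field F] [Fintype F] [DecidableEq F] (χ : Fˣ →* ℂˣ)

lemma extChar_mul (x y : F) : extChar F χ (x * y) = extChar F χ x * extChar F χ y := by
  by_cases hx : IsUnit x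
  · by_cases hy : IsUnit y
    · have hxy : IsUnit (x * y) := hx.mul hy
      have hu : hxy.unit = hx.unit * hy.unit := Units.ext (by simp)
      simp only [extChar, dif_pos hx, dif_pos hy, dif_pos hxy, hu, map_mul, Units.val_mul]
    · have hxy : ¬ IsUnit (x * y) := fun h => hy (isUnit_of_mul_isUnit_right h)
      simp only [extChar, dif_neg hy, dif_neg hxy, mul_zero]
  · have hxy : ¬ IsUnit (x * y) := fun h => hx (isUnit_of_mul_isUnit_left h)
    simp only [extChar, dif_neg hx, dif_neg hxy, zero_mul]

lemma extChar_one : extChar F χ 1 = 1 := by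
  have h1 : IsUnit (1 : F) := isUnit_one
  have hu : h1.unit = 1 := Units.ext (by simp)
  simp only [extChar, dif_pos h1, hu, map_one, Units.val_one]

lemma extChar_neg_one_sq : extChar F χ (-1) * extChar F χ (-1) = 1 := by
  rw [← extChar_mul, neg_mul_neg, one_mul, extChar_one]

lemma detF_ne_zero (g : GL (Fin 2) F) : ((g : Matrix (Fin 2) (Fin 2) F)).det ≠ 0 :=
  ((Matrix.isUnit_iff_isUnit_det _).mp g.isUnit).ne_zero

lemma borel_entries {b : GL (Fin 2) F} (hb : b ∈ BorelGL2 F) :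
    (b : Matrix (Fin 2) (Fin 2) F) 0 0 ≠ 0 ∧ (b : Matrix (Fin 2) (Fin 2) F) 1 1 ≠ 0 := by
  have h10 : (b : Matrix (Fin 2) (Fin 2) F) 1 0 = 0 := hb
  have hd := detF_ne_zero F b
  rw [Matrix.det_fin_two, h10, mul_zero, sub_zero] at hd
  exact ⟨left_ne_zero_of_mul hd, right_ne_zero_of_mul hd⟩

/-- The character of the Borel subgroup. -/
noncomputable def chiB : GL (Fin 2) F → ℂ := fun g =>
  extChar F χ ((g : Matrix (Fin 2) (Fin 2) F) 0 0) * extChar F χ ((g : Matrix (Fin 2) (Fin 2) F) 1 1)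

lemma chiB_borel {b : GL (Fin 2) F} (hb : b ∈ BorelGL2 F) :
    chiB F χ b = extChar F χ ((b : Matrix (Fin 2) (Fin 2) F)).det := by
  have h10 : (b : Matrix (Fin 2) (Fin 2) F) 1 0 = 0 := hb
  rw [chiB, Matrix.det_fin_two, h10, mul_zero, sub_zero, extChar_mul]

lemma chiB_mul : ∀ a ∈ BorelGL2 F, ∀ b ∈ BorelGL2 F,
    chiB F χ (a * b) = chiB F χ a * chiB F χ b := by
  intro a ha b hb
  rw [chiB_borel F χ (mul_mem ha hb), chiB_borel F χ ha, chiB_borel F χ hb, Units.val_mul,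
    Matrix.det_mul, extChar_mul]

lemma chiB_one : chiB F χ 1 = 1 := by
  rw [chiB]
  show extChar F χ ((1 : Matrix (Fin 2) (Fin 2) F) 0 0) * extChar F χ ((1 : Matrix (Fin 2) (Fin 2) F) 1 1) = 1
  rw [Matrix.one_apply_eq, Matrix.one_apply_eq, extChar_one, one_mul]

/-- The Weyl element. -/
noncomputable def wGL : GL (Fin 2) F :=
  Matrix.GeneralLinearGroup.mkOfDetNeZero !![(0 : F), 1; 1, 0]
    (by rw [Matrix.det_fin_two_of]; simp)

lemma wGL_coe : (wGL F : Matrix (Fin 2) (Fin 2) F) = !![(0 : F), 1; 1, 0] := rfl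

/-- candidate bi-equivariant function attached to a pair of values -/
noncomputable def pairFun (p : ℂ × ℂ) : GL (Fin 2) F → ℂ := fun g =>
  if (g : Matrix (Fin 2) (Fin 2) F) 1 0 = 0 then
    extChar F χ ((g : Matrix (Fin 2) (Fin 2) F)).det * p.1
  else extChar F χ ((g : Matrix (Fin 2) (Fin 2) F)).det * extChar F χ (-1) * p.2

lemma pairFun_mem (p : ℂ × ℂ) : pairFun F χ p ∈ biInd (BorelGL2 F) (chiB F χ) := by
  constructor
  · intro b hb g
    have h10 : (b : Matrix (Fin 2) (Fin 2) F) 1 0 = 0 := hb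
    have hbb := borel_entries F hb
    have hent : ((b * g : GL (Fin 2) F) : Matrix (Fin 2) (Fin 2) F) 1 0
        = (b : Matrix (Fin 2) (Fin 2) F) 1 1 * (g : Matrix (Fin 2) (Fin 2) F) 1 0 := by
      rw [Units.val_mul, Matrix.mul_apply, Fin.sum_univ_two, h10]; ring
    have hdet : ((b * g : GL (Fin 2) F) : Matrix (Fin 2) (Fin 2) F).det
        = (b : Matrix (Fin 2) (Fin 2) F).det * (g : Matrix (Fin 2) (Fin 2) F).det := by
      rw [Units.val_mul, Matrix.det_mul]
    rw [pairFun, pairFun, chiB_borel F χ hb]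
    by_cases hg : (g : Matrix (Fin 2) (Fin 2) F) 1 0 = 0
    · rw [if_pos (by rw [hent, hg, mul_zero]), if_pos hg, hdet, extChar_mul]
      ring
    · rw [if_neg (by rw [hent]; exact mul_ne_zero hbb.2 hg), if_neg hg, hdet, extChar_mul]
      ring
  · intro b hb g
    have h10 : (b : Matrix (Fin 2) (Fin 2) F) 1 0 = 0 := hb
    have hbb := borel_entries F hb
    have hent : ((g * b : GL (Fin 2) F) : Matrix (Fin 2) (Fin 2) F) 1 0
        = (g : Matrix (Fin 2) (Fin 2) F) 1 0 * (b : Matrix (Fin 2) (Fin 2) F) 0 0 := by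
      rw [Units.val_mul, Matrix.mul_apply, Fin.sum_univ_two, h10]; ring
    have hdet : ((g * b : GL (Fin 2) F) : Matrix (Fin 2) (Fin 2) F).det
        = (g : Matrix (Fin 2) (Fin 2) F).det * (b : Matrix (Fin 2) (Fin 2) F).det := by
      rw [Units.val_mul, Matrix.det_mul]
    rw [pairFun, pairFun, chiB_borel F χ hb]
    by_cases hg : (g : Matrix (Fin 2) (Fin 2) F) 1 0 = 0
    · rw [if_pos (by rw [hent, hg, zero_mul]), if_pos hg, hdet, extChar_mul]
      ring
    · rw [if_neg (by rw [hent]; exact mul_ne_zero hg hbb.1), if_neg hg, hdet, extChar_mul]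
      ring

end GL2

section GL2b

variable (F : Type) [Field F] [Fintype F] [DecidableEq F] (χ : Fˣ →* ℂˣ)

lemma bruhat (g : GL (Fin 2) F) (hg : (g : Matrix (Fin 2) (Fin 2) F) 1 0 ≠ 0) :
    g = Matrix.GeneralLinearGroup.mkOfDetNeZero
          !![(1 : F), (g : Matrix (Fin 2) (Fin 2) F) 0 0; 0, (g : Matrix (Fin 2) (Fin 2) F) 1 0]
          (by rw [Matrix.det_fin_two_of]; simpa using hg)
        * wGL F
        * Matrix.GeneralLinearGroup.mkOfDetNeZero
          !![(1 : F), (g : Matrix (Fin 2) (Fin 2) F) 1 1 / (g : Matrix (Fin 2) (Fin 2) F) 1 0;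
             0, -((g : Matrix (Fin 2) (Fin 2) F).det) / (g : Matrix (Fin 2) (Fin 2) F) 1 0]
          (by rw [Matrix.det_fin_two_of]
              simpa using div_ne_zero (neg_ne_zero.mpr (detF_ne_zero F g)) hg) := by
  have hdet : (g : Matrix (Fin 2) (Fin 2) F).det
      = (g : Matrix (Fin 2) (Fin 2) F) 0 0 * (g : Matrix (Fin 2) (Fin 2) F) 1 1
        - (g : Matrix (Fin 2) (Fin 2) F) 0 1 * (g : Matrix (Fin 2) (Fin 2) F) 1 0 :=
    Matrix.det_fin_two _
  apply Units.ext
  show (g : Matrix (Fin 2) (Fin 2) F)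
      = !![(1 : F), (g : Matrix (Fin 2) (Fin 2) F) 0 0; 0, (g : Matrix (Fin 2) (Fin 2) F) 1 0]
        * !![(0 : F), 1; 1, 0]
        * !![(1 : F), (g : Matrix (Fin 2) (Fin 2) F) 1 1 / (g : Matrix (Fin 2) (Fin 2) F) 1 0;
             0, -((g : Matrix (Fin 2) (Fin 2) F).det) / (g : Matrix (Fin 2) (Fin 2) F) 1 0]
  rw [hdet]
  ext i j
  fin_cases i <;> fin_cases j <;> simp [Matrix.mul_apply, Fin.sum_univ_two] <;>
    (try field_simp) <;> (try ring)

/-- The space of bi-equivariant functions is 2-dimensional. -/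
noncomputable def biEquivProd : biInd (BorelGL2 F) (chiB F χ) ≃ₗ[ℂ] ℂ × ℂ where
  toFun h := ((h : GL (Fin 2) F → ℂ) 1, (h : GL (Fin 2) F → ℂ) (wGL F))
  map_add' h h' := rfl
  map_smul' c h := rfl
  invFun p := ⟨pairFun F χ p, pairFun_mem F χ p⟩
  left_inv h := by
    apply Subtype.ext; funext g
    show pairFun F χ ((h : GL (Fin 2) F → ℂ) 1, (h : GL (Fin 2) F → ℂ) (wGL F)) g
      = (h : GL (Fin 2) F → ℂ) g
    by_cases hg : (g : Matrix (Fin 2) (Fin 2) F) 1 0 = 0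
    · have hgB : g ∈ BorelGL2 F := hg
      have h1 := h.2.2 g hgB 1
      rw [one_mul] at h1
      rw [pairFun, if_pos hg, h1, chiB_borel F χ hgB]
    · set B1 : GL (Fin 2) F := Matrix.GeneralLinearGroup.mkOfDetNeZero
        !![(1 : F), (g : Matrix (Fin 2) (Fin 2) F) 0 0; 0, (g : Matrix (Fin 2) (Fin 2) F) 1 0]
        (by rw [Matrix.det_fin_two_of]; simpa using hg) with hB1
      set B2 : GL (Fin 2) F := Matrix.GeneralLinearGroup.mkOfDetNeZero
        !![(1 : F), (g : Matrix (Fin 2) (Fin 2) F) 1 1 / (g : Matrix (Fin 2) (Fin 2) F) 1 0;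
           0, -((g : Matrix (Fin 2) (Fin 2) F).det) / (g : Matrix (Fin 2) (Fin 2) F) 1 0]
        (by rw [Matrix.det_fin_two_of]
            simpa using div_ne_zero (neg_ne_zero.mpr (detF_ne_zero F g)) hg) with hB2
      have hcoe1 : (B1 : Matrix (Fin 2) (Fin 2) F)
          = !![(1 : F), (g : Matrix (Fin 2) (Fin 2) F) 0 0; 0, (g : Matrix (Fin 2) (Fin 2) F) 1 0] :=
        rfl
      have hcoe2 : (B2 : Matrix (Fin 2) (Fin 2) F)
          = !![(1 : F), (g : Matrix (Fin 2) (Fin 2) F) 1 1 / (g : Matrix (Fin 2) (Fin 2) F) 1 0;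
               0, -((g : Matrix (Fin 2) (Fin 2) F).det) / (g : Matrix (Fin 2) (Fin 2) F) 1 0] :=
        rfl
      have hB1m : B1 ∈ BorelGL2 F := by
        show (B1 : Matrix (Fin 2) (Fin 2) F) 1 0 = 0
        rw [hcoe1]
        simp
      have hB2m : B2 ∈ BorelGL2 F := by
        show (B2 : Matrix (Fin 2) (Fin 2) F) 1 0 = 0
        rw [hcoe2]
        simp
      have hdec : g = B1 * (wGL F * B2) := by
        rw [hB1, hB2, ← mul_assoc]
        exact bruhat F g hg
      have e1 : (h : GL (Fin 2) F → ℂ) g = chiB F χ B1 * (h : GL (Fin 2) F → ℂ) (wGL F * B2) := by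
        conv_lhs => rw [hdec]
        exact h.2.1 B1 hB1m (wGL F * B2)
      have e2 : (h : GL (Fin 2) F → ℂ) (wGL F * B2)
          = chiB F χ B2 * (h : GL (Fin 2) F → ℂ) (wGL F) := h.2.2 B2 hB2m (wGL F)
      have hc1 : chiB F χ B1 = extChar F χ ((g : Matrix (Fin 2) (Fin 2) F) 1 0) := by
        rw [chiB_borel F χ hB1m, hcoe1, Matrix.det_fin_two_of]
        norm_num
      have hc2 : chiB F χ B2
          = extChar F χ (-((g : Matrix (Fin 2) (Fin 2) F).det) / (g : Matrix (Fin 2) (Fin 2) F) 1 0) := by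
        rw [chiB_borel F χ hB2m, hcoe2, Matrix.det_fin_two_of]
        norm_num
      have harg : (g : Matrix (Fin 2) (Fin 2) F) 1 0
          * (-((g : Matrix (Fin 2) (Fin 2) F).det) / (g : Matrix (Fin 2) (Fin 2) F) 1 0)
          = (g : Matrix (Fin 2) (Fin 2) F).det * (-1) := by
        field_simp
      have hfin : extChar F χ ((g : Matrix (Fin 2) (Fin 2) F) 1 0)
          * extChar F χ (-((g : Matrix (Fin 2) (Fin 2) F).det) / (g : Matrix (Fin 2) (Fin 2) F) 1 0)
          = extChar F χ ((g : Matrix (Fin 2) (Fin 2) F).det) * extChar F χ (-1) := by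
        rw [← extChar_mul, harg, extChar_mul]
      rw [pairFun, if_neg hg, e1, e2, ← mul_assoc, hc1, hc2, hfin]
  right_inv p := by
    have hw10 : (wGL F : Matrix (Fin 2) (Fin 2) F) 1 0 = 1 := by rw [wGL_coe]; simp
    have h1 : pairFun F χ p 1 = p.1 := by
      rw [pairFun, if_pos (by rw [Units.val_one]; exact Matrix.one_apply_ne (by simp))]
      rw [Units.val_one, Matrix.det_one, extChar_one, one_mul]
    have h2 : pairFun F χ p (wGL F) = p.2 := by
      rw [pairFun, if_neg (by rw [hw10]; exact one_ne_zero)]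
      have : (wGL F : Matrix (Fin 2) (Fin 2) F).det = -1 := by
        rw [wGL_coe, Matrix.det_fin_two_of]; ring
      rw [this, extChar_neg_one_sq, one_mul]
    show (pairFun F χ p 1, pairFun F χ p (wGL F)) = p
    rw [h1, h2]

end GL2b

/-- For a character `χ` of `F^×`, the endomorphism algebra of
`Ind_B^{GL_2(F)}(χ_{1,1})`, where `χ_{1,1}([[u,w],[0,v]]) = χ(u)χ(v)`, has dimension 2 over
`ℂ`; equivalently this induced representation is a direct sum of exactly two inequivalent
irreducibles. -/
theorem endalgebra_of_induced_equal_characters (F : Type) [Field F] [Fintype F] [DecidableEq F]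
    (χ : Fˣ →* ℂˣ) :
    Module.finrank ℂ
      (FDRep.of (indRep (BorelGL2 F)
          (fun g => extChar F χ ((g : Matrix (Fin 2) (Fin 2) F) 0 0) *
            extChar F χ ((g : Matrix (Fin 2) (Fin 2) F) 1 1))) ⟶
        FDRep.of (indRep (BorelGL2 F)
          (fun g => extChar F χ ((g : Matrix (Fin 2) (Fin 2) F) 0 0) *
            extChar F χ ((g : Matrix (Fin 2) (Fin 2) F) 1 1)))) = 2 := by
  have h1 : Module.finrank ℂ
      (FDRep.of (indRep (BorelGL2 F) (chiB F χ)) ⟶ FDRep.of (indRep (BorelGL2 F) (chiB F χ)))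
      = Module.finrank ℂ (biInd (BorelGL2 F) (chiB F χ)) :=
    finrank_hom_eq (BorelGL2 F) (chiB F χ) (chiB_mul F χ) (chiB_one F χ)
  have h2 : Module.finrank ℂ (biInd (BorelGL2 F) (chiB F χ)) = 2 := by
    rw [(biEquivProd F χ).finrank_eq, Module.finrank_prod, Module.finrank_self]
  rw [h2] at h1
  exact h1
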